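/- arXiv:0906.4706 — 2 statements merged into one kernel-verified Lean document; each statement's English description precedes it below -/
import Mathlib

section
/- In the German Algorithm on a violator space of combinatorial dimension d, the number of rounds is at most d + 1. -/
open Finset

/-- A violator space: a finite set `H` together with a violator mapping `V : 2^H → 2^H`
satisfying consistency and locality. -/
structure ViolatorSpace (H : Type*) [Fintype H] [DecidableEq H] where
  V : Finset H → Finset H
  consistency : ∀ G : Finset H, Disjoint G (V G)
  locality : ∀ F G : Finset H, F ⊆ G → Disjoint G (V F) → V G = V F

/-- `B` is a basis of `G` for the mapping `W`: a minimal subset of `G` with the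
same violators as `G`. -/
def IsBasisOf {H : Type*} [Fintype H] [DecidableEq H]
    (W : Finset H → Finset H) (B G : Finset H) : Prop :=
  B ⊆ G ∧ W B = W G ∧ ∀ B' : Finset H, B' ⊂ B → W B' ≠ W G

/-- The working sets of the German Algorithm started from `R`:
`G⁽⁰⁾ = R` and `G⁽ⁱ⁺¹⁾ = G⁽ⁱ⁾ ∪ V(G⁽ⁱ⁾)`.  (Round `i ≥ 1` of the algorithm
computes a basis of `G⁽ⁱ⁻¹⁾`, whose violator set is `V⁽ⁱ⁾ = V(G⁽ⁱ⁻¹⁾)`;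
once the violator set is empty the sequence stabilizes, matching the
convention that sets of later rounds equal those of the final round.) -/
def Gseq {H : Type*} [Fintype H] [DecidableEq H]
    (VS : ViolatorSpace H) (R : Finset H) : ℕ → Finset H
  | 0 => R
  | (i + 1) => Gseq VS R i ∪ VS.V (Gseq VS R i)

lemma exists_basis {H : Type*} [Fintype H] [DecidableEq H]
    (VS : ViolatorSpace H) (G : Finset H) : ∃ B, IsBasisOf VS.V B G := by
  classical
  have hne : (G.powerset.filter (fun B => VS.V B = VS.V G)).Nonempty :=
    ⟨G, by simp⟩
  obtain ⟨B, hB, hmin⟩ := Finset.exists_min_image _ Finset.card hne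
  simp only [mem_filter, mem_powerset] at hB
  refine ⟨B, hB.1, hB.2, fun B' hB' hVB' => ?_⟩
  have : B.card ≤ B'.card :=
    hmin B' (by simp [mem_filter, mem_powerset, hVB', hB'.subset.trans hB.1])
  exact absurd (Finset.card_lt_card hB') (by omega)

/-- In the German Algorithm on a violator space of combinatorial dimension `d`,
the number of rounds is at most `d + 1`: for every starting sample `R`, some
round `ℓ + 1` with `ℓ ≤ d` finds no violators, i.e. `V(G⁽ˡ⁾) = ∅`. -/
theorem german_rounds_bound {H : Type*} [Fintype H] [DecidableEq H]
    (VS : ViolatorSpace H) (d : ℕ)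
    (hd : ∀ G B : Finset H, IsBasisOf VS.V B G → B.card ≤ d)
    (R : Finset H) :
    ∃ ℓ ≤ d, VS.V (Gseq VS R ℓ) = ∅ := by
  classical
  obtain ⟨B, hB⟩ := exists_basis VS (Finset.univ : Finset H)
  have hBcard : B.card ≤ d := hd _ _ hB
  have hVuniv : VS.V Finset.univ = ∅ := by
    have := VS.consistency Finset.univ
    simpa [Finset.disjoint_left, Finset.eq_empty_iff_forall_notMem] using this
  have hVB : VS.V B = ∅ := hB.2.1.trans hVuniv
  -- key lemma: if V(G) disjoint from B then V(G) = ∅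
  have key : ∀ G : Finset H, Disjoint B (VS.V G) → VS.V G = ∅ := by
    intro G hdisj
    have h1 : VS.V (G ∪ B) = VS.V B := by
      apply VS.locality B (G ∪ B) Finset.subset_union_right
      simp [hVB]
    have h2 : VS.V (G ∪ B) = VS.V G := by
      apply VS.locality G (G ∪ B) Finset.subset_union_left
      exact Finset.disjoint_union_left.mpr ⟨VS.consistency G, hdisj⟩
    rw [← h2, h1, hVB]
  by_contra hcon
  push_neg at hcon
  -- V(Gseq i) ≠ ∅ for all i ≤ d; show (Gseq i ∩ B).card ≥ i
  have grow : ∀ i ≤ d + 1, i ≤ ((Gseq VS R i) ∩ B).card := by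
    intro i hi
    induction i with
    | zero => simp
    | succ n ih =>
      have hn : n ≤ d := by omega
      have hne : VS.V (Gseq VS R n) ≠ ∅ := (hcon n hn).ne_empty
      have hint : ¬ Disjoint B (VS.V (Gseq VS R n)) := fun h => hne (key _ h)
      rw [Finset.not_disjoint_iff] at hint
      obtain ⟨x, hxB, hxV⟩ := hint
      have hxnot : x ∉ Gseq VS R n :=
        fun hx => Finset.disjoint_left.mp (VS.consistency _) hx hxV
      have hsub : insert x (Gseq VS R n ∩ B) ⊆ Gseq VS R (n + 1) ∩ B := by
        intro y hy
        rcases Finset.mem_insert.mp hy with rfl | hy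
        · exact Finset.mem_inter.mpr ⟨Finset.mem_union_right _ hxV, hxB⟩
        · exact Finset.mem_inter.mpr ⟨Finset.mem_union_left _ (Finset.mem_inter.mp hy).1,
            (Finset.mem_inter.mp hy).2⟩
      calc n + 1 ≤ (Gseq VS R n ∩ B).card + 1 := by
            have := ih (by omega); omega
        _ = (insert x (Gseq VS R n ∩ B)).card := by
            rw [Finset.card_insert_of_notMem]
            intro h; exact hxnot (Finset.mem_inter.mp h).1
        _ ≤ _ := Finset.card_le_card hsub
  have := grow (d + 1) le_rfl
  have : ((Gseq VS R (d + 1)) ∩ B).card ≤ B.card :=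
    Finset.card_le_card Finset.inter_subset_right
  omega
end

section
/- With V' defined from the German Algorithm as above, for every R ⊆ H one has V'(R) = V_R^(1) ∪ ... ∪ V_R^(d) = G_R^(d) \ R. -/
open Finset

/-- The derived violator mapping of the German Algorithm:
`V'(R) = {h ∈ H \ R : Γ(R) ≠ Γ(R ∪ {h})}`, where
`Γ(R) = (V_R⁽¹⁾, …, V_R⁽ᵈ⁾)` is the tuple of violator sets of the first `d`
rounds of the German Algorithm started from `R` (here `V_R⁽ⁱ⁺¹⁾ = V(G_R⁽ⁱ⁾)`). -/
def Vprime {H : Type*} [Fintype H] [DecidableEq H]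
    (VS : ViolatorSpace H) (d : ℕ) (R : Finset H) : Finset H :=
  univ.filter (fun h => h ∉ R ∧
    ∃ i ∈ Finset.range d,
      VS.V (Gseq VS R i) ≠ VS.V (Gseq VS (insert h R) i))


section Aux
variable {H : Type*} [Fintype H] [DecidableEq H] (VS : ViolatorSpace H)

lemma subset_Gseq (R : Finset H) : ∀ i, R ⊆ Gseq VS R i
  | 0 => subset_rfl
  | (i+1) => (subset_Gseq R i).trans Finset.subset_union_left

lemma V_subset_Gseq (R : Finset H) {i n : ℕ} (h : i < n) :
    VS.V (Gseq VS R i) ⊆ Gseq VS R n := by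
  induction n with
  | zero => omega
  | succ n ih =>
    rcases Nat.lt_succ_iff_lt_or_eq.mp h with h | h
    · exact (ih h).trans Finset.subset_union_left
    · subst h; exact Finset.subset_union_right

lemma Gseq_eq (R : Finset H) (n : ℕ) :
    Gseq VS R n = R ∪ (Finset.range n).biUnion (fun i => VS.V (Gseq VS R i)) := by
  induction n with
  | zero => simp [Gseq]
  | succ n ih =>
    rw [Gseq, Finset.range_add_one, Finset.biUnion_insert]
    nth_rewrite 1 [ih]
    rw [Finset.union_comm (VS.V (Gseq VS R n)), ← Finset.union_assoc]

lemma Gseq_insert (R : Finset H) (h : H) (d : ℕ) (hh : h ∉ Gseq VS R d) :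
    ∀ j ≤ d, Gseq VS (insert h R) j = insert h (Gseq VS R j) := by
  intro j
  induction j with
  | zero => intro _; simp [Gseq]
  | succ j ih =>
    intro hj
    have hj' : j ≤ d := Nat.le_of_succ_le hj
    have e := ih hj'
    have hV : VS.V (Gseq VS (insert h R) j) = VS.V (Gseq VS R j) := by
      apply VS.locality
      · rw [e]; exact Finset.subset_insert _ _
      · rw [e, Finset.disjoint_insert_left]
        exact ⟨fun hmem => hh (V_subset_Gseq VS R hj hmem), VS.consistency _⟩
    show Gseq VS (insert h R) j ∪ VS.V (Gseq VS (insert h R) j) = _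
    rw [hV, e]
    ext x; simp [Gseq]

lemma V_insert (R : Finset H) (h : H) (d : ℕ) (hh : h ∉ Gseq VS R d)
    {j : ℕ} (hj : j < d) :
    VS.V (Gseq VS (insert h R) j) = VS.V (Gseq VS R j) := by
  have e := Gseq_insert VS R h d hh j (le_of_lt hj)
  apply VS.locality
  · rw [e]; exact Finset.subset_insert _ _
  · rw [e, Finset.disjoint_insert_left]
    exact ⟨fun hmem => hh (V_subset_Gseq VS R hj hmem), VS.consistency _⟩

end Aux

/-- **Lemma 4 (ii).** For every `R ⊆ H`,
`V'(R) = V_R⁽¹⁾ ∪ … ∪ V_R⁽ᵈ⁾ = G_R⁽ᵈ⁾ \ R`. -/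
theorem Vprime_eq_union {H : Type*} [Fintype H] [DecidableEq H]
    (VS : ViolatorSpace H) (d : ℕ)
    (hd : ∀ G B : Finset H, IsBasisOf VS.V B G → B.card ≤ d)
    (R : Finset H) :
    Vprime VS d R = (Finset.range d).biUnion (fun i => VS.V (Gseq VS R i)) ∧
    Vprime VS d R = Gseq VS R d \ R := by
  have key : Vprime VS d R = (Finset.range d).biUnion (fun i => VS.V (Gseq VS R i)) := by
    ext h
    simp only [Vprime, Finset.mem_filter, Finset.mem_univ, true_and, Finset.mem_biUnion,
      Finset.mem_range]
    constructor
    · rintro ⟨hR, i, hi, hne⟩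
      by_contra hcon
      push_neg at hcon
      have hh : h ∉ Gseq VS R d := by
        rw [Gseq_eq]
        simp only [Finset.mem_union, Finset.mem_biUnion, Finset.mem_range]
        rintro (hx | ⟨j, hj, hx⟩)
        · exact hR hx
        · exact hcon j hj hx
      exact hne ((V_insert VS R h d hh (by simpa using hi)).symm)
    · rintro ⟨i, hi, hmem⟩
      have hR : h ∉ R := fun hx =>
        Finset.disjoint_left.mp (VS.consistency (Gseq VS R i)) (subset_Gseq VS R i hx) hmem
      refine ⟨hR, i, by simpa using hi, fun e => ?_⟩
      have : h ∈ Gseq VS (insert h R) i := subset_Gseq VS _ i (Finset.mem_insert_self h R)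
      exact Finset.disjoint_left.mp (VS.consistency (Gseq VS (insert h R) i)) this (e ▸ hmem)
  refine ⟨key, ?_⟩
  rw [key, Gseq_eq]
  ext x
  simp only [Finset.mem_sdiff, Finset.mem_union, Finset.mem_biUnion, Finset.mem_range]
  constructor
  · rintro ⟨i, hi, hx⟩
    exact ⟨Or.inr ⟨i, hi, hx⟩, fun hR =>
      Finset.disjoint_left.mp (VS.consistency (Gseq VS R i)) (subset_Gseq VS R i hR) hx⟩
  · rintro ⟨hx | hx, hR⟩
    · exact absurd hx hR
    · exact hx
end
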